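/- Let R, S, T be bounded triangles with T 2ε-significant and α(R) ≤ α(T). If there are nonzero morphisms f: 𝕀^R → 𝕀^S(ε) and g: 𝕀^S → 𝕀^T(ε), then g(ε) ∘ f ≠ 0. -/

import Mathlib

open CategoryTheory Classical

noncomputable section

/-- Convexity of a subset of a poset. -/
def IsConvex {P : Type} [Preorder P] (I : Set P) : Prop :=
  ∀ ⦃p q r : P⦄, p ∈ I → q ∈ I → p ≤ r → r ≤ q → r ∈ I

/-- Zigzag connectivity within a subset. -/
def ZigzagConnected {P : Type} [Preorder P] (I : Set P) : Prop :=
  ∀ p ∈ I, ∀ q ∈ I,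
    Relation.ReflTransGen (fun a b => a ∈ I ∧ b ∈ I ∧ (a ≤ b ∨ b ≤ a)) p q

/-- An interval in a poset: nonempty, convex, and zigzag connected. -/
def IsIntervalSet {P : Type} [Preorder P] (I : Set P) : Prop :=
  I.Nonempty ∧ IsConvex I ∧ ZigzagConnected I

open scoped Classical in
/-- The pointwise vector space of the interval module: `k` (as `⊤`) on `I`, `0` off `I`. -/
def objSub (k : Type) [Field k] {P : Type} [Preorder P] (I : Set P) (p : P) : Submodule k k :=
  if p ∈ I then ⊤ else ⊥

open scoped Classical in
/-- The interval persistence module `𝕀^I` as a functor `P ⥤ ModuleCat k`. -/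
def intervalModule (k : Type) [Field k] {P : Type} [Preorder P] (I : Set P)
    (hI : IsConvex I) : P ⥤ ModuleCat.{0} k where
  obj p := ModuleCat.of k (objSub k I p)
  map {p q} h :=
    if hpq : p ∈ I ∧ q ∈ I then
      ModuleCat.ofHom
        { toFun := fun x => ⟨(x : k), by simp [objSub, hpq.2]⟩
          map_add' := by intros; rfl
          map_smul' := by intros; rfl }
    else 0
  map_id := by
    intro p
    try dsimp only
    by_cases hp : p ∈ I
    · rw [dif_pos ⟨hp, hp⟩]; rfl
    · rw [dif_neg (fun h => hp h.1)]
      haveI : Subsingleton ↥(objSub k I p) := by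
        rw [objSub, if_neg hp]; infer_instance
      apply ModuleCat.hom_ext; apply LinearMap.ext; intro x
      exact this.allEq _ _
  map_comp := by
    intro p q r hpq hqr
    try dsimp only
    by_cases hpr : p ∈ I ∧ r ∈ I
    · have hq : q ∈ I := hI hpr.1 hpr.2 (leOfHom hpq) (leOfHom hqr)
      rw [dif_pos hpr, dif_pos ⟨hpr.1, hq⟩, dif_pos ⟨hq, hpr.2⟩]
      rfl
    · rw [dif_neg hpr]
      by_cases hp : p ∈ I
      · have hr : r ∉ I := fun hr => hpr ⟨hp, hr⟩
        haveI : Subsingleton ↥(objSub k I r) := by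
          rw [objSub, if_neg hr]; infer_instance
        apply ModuleCat.hom_ext; apply LinearMap.ext; intro x
        exact this.allEq _ _
      · haveI : Subsingleton ↥(objSub k I p) := by
          rw [objSub, if_neg hp]; infer_instance
        apply ModuleCat.hom_ext; apply LinearMap.ext; intro x
        have hx : x = 0 := this.allEq x 0
        rw [hx]
        simp

open DirectSum

open scoped ENNReal

/-- Direct sum of a family of persistence modules. -/
def dsumF (k : Type) [Field k] {P : Type} [Preorder P] {ι : Type}
    (F : ι → P ⥤ ModuleCat.{0} k) : P ⥤ ModuleCat.{0} k where
  obj p := ModuleCat.of k (⨁ i, ((F i).obj p : Type))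
  map {p q} h := ModuleCat.ofHom
    (DFinsupp.mapRange.linearMap (fun i => (((F i).map h).hom : (F i).obj p →ₗ[k] (F i).obj q)))
  map_id := by
    intro p
    try dsimp only
    simp only [CategoryTheory.Functor.map_id]
    apply ModuleCat.hom_ext
    simp only [ModuleCat.hom_id, ModuleCat.hom_ofHom]
    exact DFinsupp.mapRange.linearMap_id
  map_comp := by
    intro p q r hpq hqr
    try dsimp only
    simp only [CategoryTheory.Functor.map_comp]
    apply ModuleCat.hom_ext; apply LinearMap.ext; intro x
    apply DFinsupp.ext; intro i
    rfl

/-- Use the preorder category structure on `Fin n → ℝ`. -/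
instance RnCat (n : ℕ) : Category (Fin n → ℝ) := Preorder.smallCategory _

/-- Diagonal translation by `ε` as an endofunctor of the poset `Fin n → ℝ`. -/
def transl (n : ℕ) (ε : ℝ) : (Fin n → ℝ) ⥤ (Fin n → ℝ) :=
  Monotone.functor (f := fun p i => p i + ε)
    (fun _ _ hab i => add_le_add_left (hab i) ε)

/-- `M` and `N` are `ε`-interleaved `ℝⁿ`-persistence modules. -/
def Interleaved (k : Type) [Field k] {n : ℕ} (ε : ℝ)
    (M N : (Fin n → ℝ) ⥤ ModuleCat.{0} k) : Prop :=
  ∃ _hε : 0 ≤ ε, ∃ (f : M ⟶ transl n ε ⋙ N) (g : N ⟶ transl n ε ⋙ M),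
    (∀ p : Fin n → ℝ, f.app p ≫ g.app (fun i => p i + ε) =
      M.map (homOfLE (show p ≤ fun i => p i + ε + ε from
        fun i => by show p i ≤ p i + ε + ε; linarith))) ∧
    (∀ p : Fin n → ℝ, g.app p ≫ f.app (fun i => p i + ε) =
      N.map (homOfLE (show p ≤ fun i => p i + ε + ε from
        fun i => by show p i ≤ p i + ε + ε; linarith)))

/-- An interval `I ⊆ ℝⁿ` is `δ`-trivial: it contains no pair `p ≤ p + δ`. -/
def SetTrivial {n : ℕ} (δ : ℝ) (I : Set (Fin n → ℝ)) : Prop :=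
  ¬ ∃ p, p ∈ I ∧ (fun i => p i + δ) ∈ I

/-- Barcode data: an indexed family of nonempty convex intervals in `ℝⁿ`. -/
structure Barcode (n : ℕ) where
  ι : Type
  I : ι → Set (Fin n → ℝ)
  nonempty : ∀ i, (I i).Nonempty
  conv : ∀ i, IsConvex (I i)

/-- The interval decomposable module associated to barcode data. -/
def Barcode.module (k : Type) [Field k] {n : ℕ} (B : Barcode n) :
    (Fin n → ℝ) ⥤ ModuleCat.{0} k :=
  dsumF k fun i => intervalModule k (B.I i) (B.conv i)

/-- `B` is pointwise finite dimensional. -/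
def Barcode.pfd (k : Type) [Field k] {n : ℕ} (B : Barcode n) : Prop :=
  ∀ p : Fin n → ℝ, Module.Finite k ((B.module k).obj p)

/-- An `ε`-matching between two barcodes: a partial bijection such that unmatched
intervals are `2ε`-trivial and matched intervals are `ε`-interleaved. -/
def Matched (k : Type) [Field k] {n : ℕ} (ε : ℝ) (B C : Barcode n) : Prop :=
  0 ≤ ε ∧ ∃ (A : Set B.ι) (A' : Set C.ι) (e : A ≃ A'),
    (∀ i ∉ A, SetTrivial (2 * ε) (B.I i)) ∧
    (∀ j ∉ A', SetTrivial (2 * ε) (C.I j)) ∧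
    (∀ i : A, Interleaved k ε
      (intervalModule k (B.I i) (B.conv i))
      (intervalModule k (C.I (e i)) (C.conv (e i))))

/-- The interleaving distance, valued in `ℝ≥0∞`. -/
def dInt (k : Type) [Field k] {n : ℕ} (M N : (Fin n → ℝ) ⥤ ModuleCat.{0} k) : ℝ≥0∞ :=
  ⨅ (ε : ℝ) (_ : Interleaved k ε M N), ENNReal.ofReal ε

/-- The bottleneck distance between barcodes, valued in `ℝ≥0∞`. -/
def dBot (k : Type) [Field k] {n : ℕ} (B C : Barcode n) : ℝ≥0∞ :=
  ⨅ (ε : ℝ) (_ : Matched k ε B C), ENNReal.ofReal ε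

/-- Rectangles: products of real intervals. -/
def rectSet {n : ℕ} (R : Fin n → Set ℝ) : Set (Fin n → ℝ) := {x | ∀ i, x i ∈ R i}

theorem rectSet_convex {n : ℕ} (R : Fin n → Set ℝ) (h : ∀ i, (R i).OrdConnected) :
    IsConvex (rectSet R) := by
  intro p q r hp hq hpr hrq i
  exact (h i).out (hp i) (hq i) ⟨hpr i, hrq i⟩

/-- A barcode consists of rectangles. -/
def IsRectBarcode {n : ℕ} (B : Barcode n) : Prop :=
  ∀ i, ∃ R : Fin n → Set ℝ,
    (∀ j, (R j).Nonempty ∧ (R j).OrdConnected) ∧ B.I i = rectSet R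

/-- A bounded triangle `{(x,y) | x < a, y < b} \ {x + y < 0}` in `ℝ²`. -/
def triangle (a b : ℝ) : Set (Fin 2 → ℝ) :=
  {p | p 0 < a ∧ p 1 < b ∧ 0 ≤ p 0 + p 1}

theorem triangle_convex (a b : ℝ) : IsConvex (triangle a b) :=
  fun _p _q _r hp hq hpr hrq =>
    ⟨lt_of_le_of_lt (hrq 0) hq.1, lt_of_le_of_lt (hrq 1) hq.2.1,
      le_trans hp.2.2 (add_le_add (hpr 0) (hpr 1))⟩

/-- A general (possibly unbounded) triangle, `a, b ∈ ℝ ∪ {∞}`. -/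
def triangleE (a b : EReal) : Set (Fin 2 → ℝ) :=
  {p | (p 0 : EReal) < a ∧ (p 1 : EReal) < b ∧ 0 ≤ p 0 + p 1}

theorem triangleE_convex (a b : EReal) : IsConvex (triangleE a b) :=
  fun _p _q _r hp hq hpr hrq =>
    ⟨lt_of_le_of_lt (EReal.coe_le_coe_iff.mpr (hrq 0)) hq.1,
      lt_of_le_of_lt (EReal.coe_le_coe_iff.mpr (hrq 1)) hq.2.1,
      le_trans hp.2.2 (add_le_add (hpr 0) (hpr 1))⟩

/-- A barcode consists of triangles. -/
def IsTriangleBarcode (B : Barcode 2) : Prop :=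
  ∀ i, ∃ a b : EReal, a ≠ ⊥ ∧ b ≠ ⊥ ∧ 0 < a + b ∧ B.I i = triangleE a b

/-- `I ⊆ ℝⁿ` is `δ`-significant. -/
def SetSignificant {n : ℕ} (δ : ℝ) (I : Set (Fin n → ℝ)) : Prop :=
  ∃ p, p ∈ I ∧ (fun i => p i + δ) ∈ I

section AuxLemmas

variable {k : Type} [Field k]

lemma mem_objSub {n : ℕ} {I : Set (Fin n → ℝ)} {p : Fin n → ℝ} (hp : p ∈ I) (x : k) :
    x ∈ objSub k I p := by
  rw [objSub, if_pos hp]; trivial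

lemma objSub_subsingleton {n : ℕ} {I : Set (Fin n → ℝ)} {p : Fin n → ℝ} (hp : p ∉ I) :
    Subsingleton (objSub k I p) := by
  rw [objSub, if_neg hp]; infer_instance

lemma im_map_val {n : ℕ} {I : Set (Fin n → ℝ)} (hI : IsConvex I) {p q : Fin n → ℝ}
    (hp : p ∈ I) (hq : q ∈ I) (h : p ⟶ q) (x : objSub k I p) :
    ((((intervalModule k I hI).map h) x)).1 = x.1 := by
  show (((if hpq : p ∈ I ∧ q ∈ I then
      ModuleCat.ofHom
        { toFun := fun y : objSub k I p => (⟨(y : k), mem_objSub hpq.2 _⟩ : objSub k I q)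
          map_add' := by intros; rfl
          map_smul' := by intros; rfl }
    else 0) x)).1 = x.1
  rw [dif_pos ⟨hp, hq⟩]; rfl

lemma im_map_zero {n : ℕ} {I : Set (Fin n → ℝ)} (hI : IsConvex I) {p q : Fin n → ℝ}
    (hpq : ¬(p ∈ I ∧ q ∈ I)) (h : p ⟶ q) :
    (intervalModule k I hI).map h = 0 := by
  show (if hpq : p ∈ I ∧ q ∈ I then
      ModuleCat.ofHom
        { toFun := fun y : objSub k I p => (⟨(y : k), mem_objSub hpq.2 _⟩ : objSub k I q)
          map_add' := by intros; rfl
          map_smul' := by intros; rfl }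
    else 0) = 0
  rw [dif_neg hpq]

end AuxLemmas
lemma triKey (k : Type) [Field k] {ε : ℝ} (hε : 0 ≤ ε) {aI bI aJ bJ : ℝ}
    (F : intervalModule k (triangle aI bI) (triangle_convex aI bI) ⟶
      transl 2 ε ⋙ intervalModule k (triangle aJ bJ) (triangle_convex aJ bJ))
    (hF : F ≠ 0) :
    (aJ - ε ≤ aI) ∧ (bJ - ε ≤ bI) ∧
    ∀ p : Fin 2 → ℝ, p ∈ triangle aI bI → (fun i => p i + ε) ∈ triangle aJ bJ →
      ∀ x : objSub k (triangle aI bI) p, x.1 ≠ 0 → (F.app p x).1 ≠ 0 := by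
  have nat : ∀ (p q : Fin 2 → ℝ) (hpq : p ≤ q) (x : objSub k (triangle aI bI) p),
      F.app q ((intervalModule k (triangle aI bI) (triangle_convex aI bI)).map (homOfLE hpq) x)
        = (intervalModule k (triangle aJ bJ) (triangle_convex aJ bJ)).map
            ((transl 2 ε).map (homOfLE hpq)) (F.app p x) := by
    intro p q hpq x
    exact congrArg (fun φ => ModuleCat.Hom.hom φ x) (F.naturality (homOfLE hpq))
  have hex : ∃ (p : Fin 2 → ℝ) (x : objSub k (triangle aI bI) p), (F.app p x).1 ≠ 0 := by
    by_contra hc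
    push_neg at hc
    apply hF
    apply NatTrans.ext
    funext p
    apply ModuleCat.hom_ext
    apply LinearMap.ext
    intro x
    exact Subtype.ext (hc p x)
  obtain ⟨p₀, x₀, hx₀⟩ := hex
  have hp₀I : p₀ ∈ triangle aI bI := by
    by_contra hp
    have hs := objSub_subsingleton (k := k) hp
    have hz : x₀ = 0 := @Subsingleton.elim _ hs x₀ 0
    apply hx₀
    rw [hz]
    exact congrArg Subtype.val (map_zero (F.app p₀).hom)
  have hp₀J : (fun i => p₀ i + ε) ∈ triangle aJ bJ := by
    by_contra hp
    have hs := objSub_subsingleton (k := k) hp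
    apply hx₀
    rw [@Subsingleton.elim _ hs (F.app p₀ x₀) 0]
    rfl
  have kill : ∀ q : Fin 2 → ℝ, p₀ ≤ q → (fun i => q i + ε) ∈ triangle aJ bJ →
      q ∈ triangle aI bI := by
    intro q hle hqJ
    by_contra hqI
    have h1 := nat p₀ q hle x₀
    rw [im_map_zero (triangle_convex aI bI) (fun h => hqI h.2) (homOfLE hle)] at h1
    have h2 : ((intervalModule k (triangle aJ bJ) (triangle_convex aJ bJ)).map
        ((transl 2 ε).map (homOfLE hle)) (F.app p₀ x₀)).1 = (F.app p₀ x₀).1 :=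
      im_map_val _ hp₀J hqJ _ _
    apply hx₀
    rw [← h2, ← h1]
    have hz : ((0 : (intervalModule k (triangle aI bI) (triangle_convex aI bI)).obj p₀ ⟶
        (intervalModule k (triangle aI bI) (triangle_convex aI bI)).obj q)) x₀ = 0 := rfl
    rw [hz, map_zero]
    rfl
  have hIa : aJ - ε ≤ aI := by
    by_contra hlt
    push_neg at hlt
    have h1 : p₀ 0 + ε < aJ := hp₀J.1
    have h2 : p₀ 1 + ε < bJ := hp₀J.2.1
    have h3 : 0 ≤ p₀ 0 + p₀ 1 := hp₀I.2.2
    have hle : p₀ ≤ ![max aI (p₀ 0), p₀ 1] := by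
      intro i
      fin_cases i
      · exact le_max_right _ _
      · exact le_refl _
    have hqJ : (fun i => (![max aI (p₀ 0), p₀ 1] : Fin 2 → ℝ) i + ε) ∈ triangle aJ bJ := by
      refine ⟨?_, ?_, ?_⟩
      · show max aI (p₀ 0) + ε < aJ
        have := max_lt (show aI < aJ - ε by linarith) (show p₀ 0 < aJ - ε by linarith)
        linarith
      · show p₀ 1 + ε < bJ
        exact h2
      · show (0:ℝ) ≤ (max aI (p₀ 0) + ε) + (p₀ 1 + ε)
        have := le_max_right aI (p₀ 0)
        linarith
    have hm := kill _ hle hqJ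
    have h4 : max aI (p₀ 0) < aI := hm.1
    have := le_max_left aI (p₀ 0)
    linarith
  have hIb : bJ - ε ≤ bI := by
    by_contra hlt
    push_neg at hlt
    have h1 : p₀ 0 + ε < aJ := hp₀J.1
    have h2 : p₀ 1 + ε < bJ := hp₀J.2.1
    have h3 : 0 ≤ p₀ 0 + p₀ 1 := hp₀I.2.2
    have hle : p₀ ≤ ![p₀ 0, max bI (p₀ 1)] := by
      intro i
      fin_cases i
      · exact le_refl _
      · exact le_max_right _ _
    have hqJ : (fun i => (![p₀ 0, max bI (p₀ 1)] : Fin 2 → ℝ) i + ε) ∈ triangle aJ bJ := by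
      refine ⟨?_, ?_, ?_⟩
      · show p₀ 0 + ε < aJ
        exact h1
      · show max bI (p₀ 1) + ε < bJ
        have := max_lt (show bI < bJ - ε by linarith) (show p₀ 1 < bJ - ε by linarith)
        linarith
      · show (0:ℝ) ≤ (p₀ 0 + ε) + (max bI (p₀ 1) + ε)
        have := le_max_right bI (p₀ 1)
        linarith
    have hm := kill _ hle hqJ
    have h4 : max bI (p₀ 1) < bI := hm.2.1
    have := le_max_left bI (p₀ 1)
    linarith
  refine ⟨hIa, hIb, ?_⟩
  intro p hpI hpJ x hxv
  have hx₀v : x₀.1 ≠ 0 := by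
    intro h0
    apply hx₀
    have hz0 : x₀ = 0 := Subtype.ext h0
    rw [hz0]
    exact congrArg Subtype.val (map_zero (F.app p₀).hom)
  have hpq : p ≤ (fun i => max (p i) (p₀ i)) := fun i => le_max_left _ _
  have hp₀q : p₀ ≤ (fun i => max (p i) (p₀ i)) := fun i => le_max_right _ _
  have hqI : (fun i => max (p i) (p₀ i)) ∈ triangle aI bI := by
    refine ⟨?_, ?_, ?_⟩
    · exact max_lt hpI.1 hp₀I.1
    · exact max_lt hpI.2.1 hp₀I.2.1
    · show (0:ℝ) ≤ max (p 0) (p₀ 0) + max (p 1) (p₀ 1)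
      have h5 := hpI.2.2
      have := le_max_left (p 0) (p₀ 0)
      have := le_max_left (p 1) (p₀ 1)
      linarith
  have hqJ : (fun i => (fun i => max (p i) (p₀ i)) i + ε) ∈ triangle aJ bJ := by
    have h1 : p 0 + ε < aJ := hpJ.1
    have h2 : p 1 + ε < bJ := hpJ.2.1
    have h3 : p₀ 0 + ε < aJ := hp₀J.1
    have h4 : p₀ 1 + ε < bJ := hp₀J.2.1
    refine ⟨?_, ?_, ?_⟩
    · show max (p 0) (p₀ 0) + ε < aJ
      have := max_lt (show p 0 < aJ - ε by linarith) (show p₀ 0 < aJ - ε by linarith)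
      linarith
    · show max (p 1) (p₀ 1) + ε < bJ
      have := max_lt (show p 1 < bJ - ε by linarith) (show p₀ 1 < bJ - ε by linarith)
      linarith
    · show (0:ℝ) ≤ (max (p 0) (p₀ 0) + ε) + (max (p 1) (p₀ 1) + ε)
      have h5 := hpI.2.2
      have := le_max_left (p 0) (p₀ 0)
      have := le_max_left (p 1) (p₀ 1)
      linarith
  have hnat₀ := nat p₀ _ hp₀q x₀
  have hnatp := nat p _ hpq x
  have hyval : (F.app (fun i => max (p i) (p₀ i))
      ((intervalModule k (triangle aI bI) (triangle_convex aI bI)).map (homOfLE hp₀q) x₀)).1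
      = (F.app p₀ x₀).1 := by
    rw [hnat₀]
    exact im_map_val _ hp₀J hqJ _ _
  have hzy : (intervalModule k (triangle aI bI) (triangle_convex aI bI)).map (homOfLE hpq) x
      = (x.1 * x₀.1⁻¹) •
        ((intervalModule k (triangle aI bI) (triangle_convex aI bI)).map (homOfLE hp₀q) x₀) := by
    apply Subtype.ext
    have e1 := im_map_val (k := k) (triangle_convex aI bI) hpI hqI (homOfLE hpq) x
    have e2 := im_map_val (k := k) (triangle_convex aI bI) hp₀I hqI (homOfLE hp₀q) x₀
    show _ = (x.1 * x₀.1⁻¹) *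
        (((intervalModule k (triangle aI bI) (triangle_convex aI bI)).map (homOfLE hp₀q) x₀)).1
    rw [e1, e2]
    field_simp
  intro hFpx0
  have hval2 : (F.app (fun i => max (p i) (p₀ i))
      ((intervalModule k (triangle aI bI) (triangle_convex aI bI)).map (homOfLE hpq) x)).1
      = (F.app p x).1 := by
    rw [hnatp]
    exact im_map_val _ hpJ hqJ _ _
  have hval3 : (F.app (fun i => max (p i) (p₀ i))
      ((intervalModule k (triangle aI bI) (triangle_convex aI bI)).map (homOfLE hpq) x)).1
      = (x.1 * x₀.1⁻¹) * (F.app p₀ x₀).1 := by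
    rw [hzy, map_smul]
    show (x.1 * x₀.1⁻¹) * (F.app (fun i => max (p i) (p₀ i))
      ((intervalModule k (triangle aI bI) (triangle_convex aI bI)).map (homOfLE hp₀q) x₀)).1 = _
    rw [hyval]
  rw [hval2, hFpx0] at hval3
  rcases mul_eq_zero.mp hval3.symm with h | h
  · exact absurd h (mul_ne_zero hxv (inv_ne_zero hx₀v))
  · exact hx₀ h
/-- **Lemma 3.16.** Let `R`, `S`, `T` be bounded triangles with `T`
`2ε`-significant and `α(R) ≤ α(T)`.  If `f : 𝕀^R ⟶ 𝕀^S(ε)` and `g : 𝕀^S ⟶ 𝕀^T(ε)` are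
nonzero, then `g(ε) ∘ f ≠ 0`. -/
theorem triangle_nonzero_composite
    (k : Type) [Field k] (ε : ℝ) (hε : 0 ≤ ε)
    (aR bR aS bS aT bT : ℝ)
    (hR : 0 < aR + bR) (hS : 0 < aS + bS) (hT : 0 < aT + bT)
    (hTsig : SetSignificant (2 * ε) (triangle aT bT))
    (hα : aR + bR ≤ aT + bT)
    (f : intervalModule k (triangle aR bR) (triangle_convex aR bR) ⟶
      transl 2 ε ⋙ intervalModule k (triangle aS bS) (triangle_convex aS bS))
    (g : intervalModule k (triangle aS bS) (triangle_convex aS bS) ⟶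
      transl 2 ε ⋙ intervalModule k (triangle aT bT) (triangle_convex aT bT))
    (hf : f ≠ 0) (hg : g ≠ 0) :
    f ≫ CategoryTheory.Functor.whiskerLeft (transl 2 ε) g ≠ 0 := by
  obtain ⟨hfa, hfb, hfkey⟩ := triKey k hε f hf
  obtain ⟨hga, hgb, hgkey⟩ := triKey k hε g hg
  obtain ⟨ps, hps1, hps2⟩ := hTsig
  have hA : ps 0 + 2*ε < aT := hps2.1
  have hB : ps 1 + 2*ε < bT := hps2.2.1
  have hC : 0 ≤ ps 0 + ps 1 := hps1.2.2
  have hsig : 4 * ε < aT + bT := by linarith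
  set x0 : ℝ := aT - 2*ε - (aT + bT - 4*ε)/2 with hx0def
  have hx0a : x0 < aT - 2*ε := by rw [hx0def]; linarith
  have hx0b : -x0 < bT - 2*ε := by rw [hx0def]; linarith
  set pst : Fin 2 → ℝ := ![x0, -x0] with hpst
  have hmemR : pst ∈ triangle aR bR := by
    refine ⟨?_, ?_, ?_⟩
    · show x0 < aR; linarith
    · show -x0 < bR; linarith
    · show (0:ℝ) ≤ x0 + -x0; linarith
  have hmemS : (fun i => pst i + ε) ∈ triangle aS bS := by
    refine ⟨?_, ?_, ?_⟩
    · show x0 + ε < aS; linarith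
    · show -x0 + ε < bS; linarith
    · show (0:ℝ) ≤ (x0 + ε) + (-x0 + ε); linarith
  have hmemT : (fun i => (fun i => pst i + ε) i + ε) ∈ triangle aT bT := by
    refine ⟨?_, ?_, ?_⟩
    · show (x0 + ε) + ε < aT; linarith
    · show (-x0 + ε) + ε < bT; linarith
    · show (0:ℝ) ≤ ((x0 + ε) + ε) + ((-x0 + ε) + ε); linarith
  have h1 : (f.app pst ⟨1, mem_objSub hmemR 1⟩).1 ≠ 0 :=
    hfkey pst hmemR hmemS ⟨1, mem_objSub hmemR 1⟩ one_ne_zero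
  have h2 : (g.app (fun i => pst i + ε) (f.app pst ⟨1, mem_objSub hmemR 1⟩)).1 ≠ 0 :=
    hgkey (fun i => pst i + ε) hmemS hmemT (f.app pst ⟨1, mem_objSub hmemR 1⟩) h1
  intro h0
  apply h2
  have h3 := congrArg (fun φ => ModuleCat.Hom.hom φ
    (⟨1, mem_objSub hmemR 1⟩ : objSub k (triangle aR bR) pst)) (congrFun (congrArg NatTrans.app h0) pst)
  exact congrArg Subtype.val h3
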